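/- Consider the Fermi-Pasta-Ulam-Tsingou right-hand side f_l(x₁,…,x_d) = (x_{l+1} − 2x_l + x_{l-1}) + β(x_{l+1} − x_l)³ − β(x_l − x_{l-1})³ (with x₀ = x_{d+1} = 0), for a fixed l with 1 < l < d. Then its coefficient tensor θ_l with respect to the monomial dictionary {1, x, x², x³} in each variable (so p̃ = 4) has k-th unfolding rank at most 4 for k ∈ {l−1, l} and unfolding rank exactly 1 for all k with |k − l| > 1 or k < l−1 (i.e., r_k = 1 for k ∉ {l−1, l}). -/

import Mathlib

open MvPolynomial

/-- The `k`-th unfolding matrix of a tensor `θ ∈ ℝ^{p^d}`. -/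
def unfold (p d k : ℕ) (θ : (Fin d → Fin p) → ℝ) :
    Matrix (Fin k → Fin p) (Fin (d - k) → Fin p) ℝ :=
  fun a b => θ (fun i => if h : (i : ℕ) < k then a ⟨i, h⟩ else b ⟨(i : ℕ) - k, by omega⟩)

lemma aux_one_le_rank {m n : Type*} [Fintype m] [Fintype n] [DecidableEq n]
    (M : Matrix m n ℝ) (a : m) (b : n) (h : M a b ≠ 0) : 1 ≤ M.rank := by
  rw [Matrix.rank, Nat.one_le_iff_ne_zero, ← Nat.pos_iff_ne_zero]
  have : Nontrivial (LinearMap.range M.mulVecLin) := by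
    refine ⟨⟨M.mulVecLin (Pi.single b 1), LinearMap.mem_range_self _ _⟩, 0, ?_⟩
    intro hc
    apply h
    have h2 : M.mulVecLin (Pi.single b 1) = 0 := by
      simpa using Subtype.ext_iff.mp hc
    have := congrFun h2 a
    simpa [Matrix.mulVecLin, Matrix.mulVec_single] using this
  exact Module.finrank_pos

lemma aux_rank_le_one {m n : Type*} [Fintype m] [Fintype n]
    (M : Matrix m n ℝ) (f : m → ℝ) (g : n → ℝ) (h : ∀ a b, M a b = f a * g b) :
    M.rank ≤ 1 := by
  have hM : M = Matrix.replicateCol Unit f * Matrix.replicateRow Unit g := by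
    rw [← Matrix.vecMulVec_eq]
    ext a b
    simp [Matrix.vecMulVec, h a b]
  calc M.rank ≤ (Matrix.replicateRow Unit g).rank := hM ▸ Matrix.rank_mul_le_right _ _
    _ ≤ Fintype.card Unit := Matrix.rank_le_card_height _
    _ = 1 := by simp

lemma aux_coeffs_eq {d : ℕ} (θ : (Fin d → Fin 4) → ℝ) (Q : MvPolynomial (Fin d) ℝ)
    (h : ∀ x : Fin d → ℝ,
      (∑ idx : Fin d → Fin 4, θ idx * ∏ k : Fin d, x k ^ (idx k : ℕ)) = eval x Q) :
    ∀ idx : Fin d → Fin 4,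
      θ idx = Q.coeff (Finsupp.equivFunOnFinite.symm fun j => (idx j : ℕ)) := by
  set m : (Fin d → Fin 4) → (Fin d →₀ ℕ) :=
    fun idx => Finsupp.equivFunOnFinite.symm fun j => (idx j : ℕ) with hm
  have hminj : Function.Injective m := by
    intro a b hab
    have h2 : (fun j => ((a j : ℕ))) = fun j => ((b j : ℕ)) :=
      Finsupp.equivFunOnFinite.symm.injective hab
    funext j
    exact Fin.ext (congrFun h2 j)
  have hPQ : (∑ idx : Fin d → Fin 4, (monomial (m idx)) (θ idx)) = Q := by
    apply MvPolynomial.funext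
    intro x
    rw [map_sum, ← h x]
    refine Finset.sum_congr rfl fun idx _ => ?_
    rw [eval_monomial]
    congr 1
    rw [Finsupp.prod_fintype _ _ (fun i => pow_zero (x i))]
    rfl
  intro idx
  have h3 := congrArg (fun p => MvPolynomial.coeff (m idx) p) hPQ
  simp only [MvPolynomial.coeff_sum, coeff_monomial] at h3
  rw [← h3]
  rw [Finset.sum_congr rfl (fun i _ => by
    rw [show (if m i = m idx then θ i else 0) = (if i = idx then θ i else 0) by
      simp [hminj.eq_iff]])]
  simp

set_option maxHeartbeats 1000000 in
/-- The coefficient tensor `θ_l` (monomial dictionary `{1,x,x²,x³}`, `p̃ = 4`)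
of the FPUT right-hand side
`f_l(x) = (x_{l+1} − 2x_l + x_{l-1}) + β(x_{l+1} − x_l)³ − β(x_l − x_{l-1})³`
(`l` 1-based with `1 < l < d`) has `k`-th unfolding rank at most `4` for `k ∈ {l−1, l}`
and unfolding rank exactly `1` for all other cuts `k`. -/
theorem stmt13 (d : ℕ) (β : ℝ) (l : ℕ) (hl1 : 1 < l) (hl2 : l < d)
    (θ : (Fin d → Fin 4) → ℝ)
    (hθ : ∀ x : Fin d → ℝ,
      (∑ idx : Fin d → Fin 4, θ idx * ∏ k : Fin d, x k ^ (idx k : ℕ)) =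
        (x ⟨l, by omega⟩ - 2 * x ⟨l - 1, by omega⟩ + x ⟨l - 2, by omega⟩)
        + β * (x ⟨l, by omega⟩ - x ⟨l - 1, by omega⟩) ^ 3
        - β * (x ⟨l - 1, by omega⟩ - x ⟨l - 2, by omega⟩) ^ 3) :
    ∀ (k : ℕ) (_hk1 : 1 ≤ k) (_hk2 : k ≤ d - 1),
      ((k = l - 1 ∨ k = l) → (unfold 4 d k θ).rank ≤ 4) ∧
      (k ≠ l - 1 → k ≠ l → (unfold 4 d k θ).rank = 1) := by
  classical
  have hu : l - 2 < d := by omega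
  have hv : l - 1 < d := by omega
  have hw : l < d := hl2
  set u : Fin d := ⟨l - 2, hu⟩ with hudef
  set v : Fin d := ⟨l - 1, hv⟩ with hvdef
  set w : Fin d := ⟨l, hw⟩ with hwdef
  set Q : MvPolynomial (Fin d) ℝ :=
    (X w - 2 * X v + X u) + C β * (X w - X v) ^ 3 - C β * (X v - X u) ^ 3 with hQdef
  have hEQ : ∀ x : Fin d → ℝ,
      (∑ idx : Fin d → Fin 4, θ idx * ∏ k : Fin d, x k ^ (idx k : ℕ)) = eval x Q := by
    intro x
    rw [hθ x, hQdef]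
    simp only [map_sub, map_add, map_mul, map_pow, eval_X, map_ofNat, eval_C]
  have hcoeff := aux_coeffs_eq θ Q hEQ
  -- Q is supported on {u, v, w}
  have hsupp : Q ∈ MvPolynomial.supported ℝ ({u, v, w} : Set (Fin d)) := by
    have hXu : (X u : MvPolynomial (Fin d) ℝ) ∈ MvPolynomial.supported ℝ ({u, v, w} : Set (Fin d)) :=
      X_mem_supported.mpr (by simp)
    have hXv : (X v : MvPolynomial (Fin d) ℝ) ∈ MvPolynomial.supported ℝ ({u, v, w} : Set (Fin d)) :=
      X_mem_supported.mpr (by simp)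
    have hXw : (X w : MvPolynomial (Fin d) ℝ) ∈ MvPolynomial.supported ℝ ({u, v, w} : Set (Fin d)) :=
      X_mem_supported.mpr (by simp)
    have hC : (C β : MvPolynomial (Fin d) ℝ) ∈ MvPolynomial.supported ℝ ({u, v, w} : Set (Fin d)) := by
      have : (C β : MvPolynomial (Fin d) ℝ) = algebraMap ℝ _ β := rfl
      rw [this]; exact Subalgebra.algebraMap_mem _ β
    have h2 : (2 : MvPolynomial (Fin d) ℝ) ∈ MvPolynomial.supported ℝ ({u, v, w} : Set (Fin d)) := by
      rw [show (2 : MvPolynomial (Fin d) ℝ) = algebraMap ℝ _ 2 by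
        rw [show (algebraMap ℝ (MvPolynomial (Fin d) ℝ)) 2 = C 2 from rfl]
        exact (map_ofNat C 2).symm]
      exact Subalgebra.algebraMap_mem _ 2
    rw [hQdef]
    exact Subalgebra.sub_mem _
      (Subalgebra.add_mem _
        (Subalgebra.add_mem _ (Subalgebra.sub_mem _ hXw (Subalgebra.mul_mem _ h2 hXv)) hXu)
        (Subalgebra.mul_mem _ hC (Subalgebra.pow_mem _ (Subalgebra.sub_mem _ hXw hXv) 3)))
      (Subalgebra.mul_mem _ hC (Subalgebra.pow_mem _ (Subalgebra.sub_mem _ hXv hXu) 3))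
  -- Claim A : θ vanishes on indices touching variables outside {u,v,w}
  have claimA : ∀ idx : Fin d → Fin 4, ∀ j : Fin d,
      ((j : ℕ) < l - 2 ∨ l < (j : ℕ)) → idx j ≠ 0 → θ idx = 0 := by
    intro idx j hj hij
    rw [hcoeff idx]
    by_contra hc
    have hjsupp : j ∈ (Finsupp.equivFunOnFinite.symm fun j => ((idx j : ℕ))).support := by
      rw [Finsupp.mem_support_iff]
      show (idx j : ℕ) ≠ 0
      exact fun h => hij (Fin.ext h)
    have hjv : j ∈ Q.vars := (mem_vars j).mpr ⟨_, mem_support_iff.mpr hc, hjsupp⟩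
    have := MvPolynomial.mem_supported.mp hsupp (Finset.mem_coe.mpr hjv)
    simp only [Set.mem_insert_iff, Set.mem_singleton_iff, hudef, hvdef, hwdef,
      Fin.ext_iff] at this
    omega
  -- Claim B : the coefficient of x_l is 1
  have huv : u ≠ v := by simp [hudef, hvdef, Fin.ext_iff]; omega
  have hvw : v ≠ w := by simp [hvdef, hwdef, Fin.ext_iff]; omega
  have huw : u ≠ w := by simp [hudef, hwdef, Fin.ext_iff]; omega
  have claimB : θ (fun j => if (j : ℕ) = l then 1 else 0) = 1 := by
    rw [hcoeff]
    have hms : (Finsupp.equivFunOnFinite.symm fun j : Fin d =>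
        (((if ((j : ℕ) = l) then (1 : Fin 4) else 0) : Fin 4) : ℕ)) = Finsupp.single w 1 := by
      ext j
      show (((if ((j : ℕ) = l) then (1 : Fin 4) else 0) : Fin 4) : ℕ) = _
      rw [Finsupp.single_apply]
      rcases eq_or_ne (j : ℕ) l with h | h
      · rw [if_pos h, if_pos (by simp [hwdef, Fin.ext_iff, h])]
        rfl
      · rw [if_neg h, if_neg (by simp [hwdef, Fin.ext_iff]; omega)]
        rfl
    rw [hms, hQdef]
    have hdeg : (Finsupp.single w 1).degree = 1 := by
      exact Finsupp.degree_single w 1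
    have hcube : ∀ a b : Fin d, coeff (Finsupp.single w 1)
        (((X a - X b : MvPolynomial (Fin d) ℝ)) ^ 3) = 0 := by
      intro a b
      have hh : ((X a - X b : MvPolynomial (Fin d) ℝ) ^ 3).IsHomogeneous 3 := by
        simpa using ((isHomogeneous_X ℝ a).sub (isHomogeneous_X ℝ b)).pow 3
      exact hh.coeff_eq_zero (by rw [hdeg]; omega)
    have h2C : (2 : MvPolynomial (Fin d) ℝ) = C 2 := (map_ofNat C 2).symm
    rw [coeff_sub, coeff_add, coeff_add, coeff_sub, h2C, coeff_C_mul, coeff_C_mul,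
      coeff_C_mul, hcube, hcube, coeff_X_same]
    rw [coeff_X' v, coeff_X' u]
    rw [if_neg (by rw [Finsupp.single_eq_single_iff]; exact fun h => hvw (h.resolve_right (by simp)).1), 
      if_neg (by rw [Finsupp.single_eq_single_iff]; exact fun h => huw (h.resolve_right (by simp)).1)]
    ring
  -- helper: unfolding entries
  have hval : ∀ (k : ℕ) (a : Fin k → Fin 4) (b : Fin (d - k) → Fin 4),
      unfold 4 d k θ a b =
        θ (fun i => if h : (i : ℕ) < k then a ⟨i, h⟩ else b ⟨(i : ℕ) - k, by omega⟩) :=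
    fun _ _ _ => rfl
  intro k hk1 hk2
  constructor
  · -- rank ≤ 4 when k = l-1 or k = l
    rintro (rfl | rfl)
    · -- k = l - 1 : factor through the value at position l-2 on the left
      set e : Fin 4 → (Fin (l - 1) → Fin 4) := fun i j => if (j : ℕ) = l - 2 then i else 0
        with hedef
      have heval : ∀ i : Fin 4, e i ⟨l - 2, by omega⟩ = i := by
        intro i; simp [hedef]
      have heinj : Function.Injective e := by
        intro i i' hii
        rw [← heval i, ← heval i', hii]
      set A : Matrix (Fin (l - 1) → Fin 4) (Fin 4) ℝ :=
        fun a i => if a = e i then 1 else 0 with hAdef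
      set B : Matrix (Fin 4) (Fin (d - (l - 1)) → Fin 4) ℝ :=
        fun i b => unfold 4 d (l - 1) θ (e i) b with hBdef
      have hAB : unfold 4 d (l - 1) θ = A * B := by
        ext a b
        rw [Matrix.mul_apply]
        by_cases hzero : ∀ j : Fin (l - 1), (j : ℕ) ≠ l - 2 → a j = 0
        · have ha : a = e (a ⟨l - 2, by omega⟩) := by
            funext j
            by_cases hj : (j : ℕ) = l - 2
            · have hj' : j = ⟨l - 2, by omega⟩ := Fin.ext hj
              rw [hj']
              simp [hedef]
            · simp only [hedef, if_neg hj]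
              exact hzero j hj
          rw [ha]
          rw [Finset.sum_eq_single (a ⟨l - 2, by omega⟩)]
          · rw [hAdef]; simp [hBdef]
          · intro i _ hi
            rw [hAdef]
            simp only [hedef]
            rw [if_neg (fun hc => hi (heinj hc).symm), zero_mul]
          · simp
        · push_neg at hzero
          obtain ⟨j, hj, haj⟩ := hzero
          have hM0 : unfold 4 d (l - 1) θ a b = 0 := by
            rw [hval]
            refine claimA _ ⟨(j : ℕ), by omega⟩ (Or.inl (by
              simp only [Fin.val_mk]; omega)) ?_
            simp only [Fin.val_mk, dif_pos j.isLt, Fin.eta]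
            exact haj
          rw [hM0]
          rw [Finset.sum_eq_zero]
          intro i _
          rw [hAdef]
          simp only
          rw [if_neg, zero_mul]
          intro hc
          apply haj
          rw [hc, hedef]
          simp [hj]
      rw [hAB]
      calc (A * B).rank ≤ B.rank := Matrix.rank_mul_le_right _ _
        _ ≤ Fintype.card (Fin 4) := Matrix.rank_le_card_height _
        _ = 4 := by simp
    · -- k = k : factor through the value at position k on the right
      have hdl : 0 < d - k := by omega
      set e : Fin 4 → (Fin (d - k) → Fin 4) := fun i j => if (j : ℕ) = 0 then i else 0
        with hedef
      have heval : ∀ i : Fin 4, e i ⟨0, hdl⟩ = i := by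
        intro i; simp [hedef]
      have heinj : Function.Injective e := by
        intro i i' hii
        rw [← heval i, ← heval i', hii]
      set A : Matrix (Fin k → Fin 4) (Fin 4) ℝ :=
        fun a i => unfold 4 d k θ a (e i) with hAdef
      set B : Matrix (Fin 4) (Fin (d - k) → Fin 4) ℝ :=
        fun i b => if b = e i then 1 else 0 with hBdef
      have hAB : unfold 4 d k θ = A * B := by
        ext a b
        rw [Matrix.mul_apply]
        by_cases hzero : ∀ j : Fin (d - k), (j : ℕ) ≠ 0 → b j = 0
        · have hb : b = e (b ⟨0, hdl⟩) := by
            funext j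
            by_cases hj : (j : ℕ) = 0
            · have hj' : j = ⟨0, hdl⟩ := Fin.ext hj
              rw [hj']
              simp [hedef]
            · simp only [hedef, if_neg hj]
              exact hzero j hj
          rw [hb]
          rw [Finset.sum_eq_single (b ⟨0, hdl⟩)]
          · rw [hBdef]; simp [hAdef]
          · intro i _ hi
            rw [hBdef]
            simp only
            rw [if_neg (fun hc => hi (heinj hc).symm), mul_zero]
          · simp
        · push_neg at hzero
          obtain ⟨j, hj, hbj⟩ := hzero
          have hM0 : unfold 4 d k θ a b = 0 := by
            rw [hval]
            refine claimA _ ⟨k + (j : ℕ), by omega⟩ (Or.inr (by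
              simp only [Fin.val_mk]; omega)) ?_
            simp only [Fin.val_mk]
            rw [dif_neg (by omega)]
            have hidx : (⟨k + (j : ℕ) - k, by omega⟩ : Fin (d - k)) = j := by
              apply Fin.ext
              simp only [Fin.val_mk]
              omega
            rw [hidx]
            exact hbj
          rw [hM0]
          rw [Finset.sum_eq_zero]
          intro i _
          rw [hBdef]
          simp only
          rw [if_neg, mul_zero]
          intro hc
          apply hbj
          rw [hc, hedef]
          simp [hj]
      rw [hAB]
      calc (A * B).rank ≤ A.rank := Matrix.rank_mul_le_left _ _
        _ ≤ Fintype.card (Fin 4) := Matrix.rank_le_card_width _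
        _ = 4 := by simp
  · -- rank = 1 for all other cuts
    intro hkl1 hkl
    have hcase : k ≤ l - 2 ∨ l + 1 ≤ k := by omega
    have hidx0 : θ (fun j => if (j : ℕ) = l then 1 else 0) = 1 := claimB
    rcases hcase with hcase | hcase
    · -- all three active variables on the right of the cut
      have hrank1 : (unfold 4 d k θ).rank ≤ 1 := by
        apply aux_rank_le_one _ (fun a => if a = 0 then 1 else 0)
          (fun b => unfold 4 d k θ 0 b)
        intro a b
        by_cases ha : a = 0
        · rw [ha, if_pos rfl, one_mul]
        · rw [if_neg ha, zero_mul]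
          obtain ⟨j, haj⟩ := Function.ne_iff.mp ha
          rw [hval]
          refine claimA _ ⟨(j : ℕ), by omega⟩ (Or.inl (by
            simp only [Fin.val_mk]; omega)) ?_
          simp only [Fin.val_mk, dif_pos j.isLt, Fin.eta]
          exact haj
      have hrank2 : 1 ≤ (unfold 4 d k θ).rank := by
        refine aux_one_le_rank (unfold 4 d k θ) 0
          (fun j => if (j : ℕ) = l - k then 1 else 0) ?_
        have hent : unfold 4 d k θ 0 (fun j => if (j : ℕ) = l - k then 1 else 0) =
            θ (fun j => if (j : ℕ) = l then 1 else 0) := by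
          rw [hval]
          congr 1
          funext i
          by_cases hi : (i : ℕ) < k
          · rw [dif_pos hi]
            simp only [Pi.zero_apply]
            rw [if_neg (by omega)]
          · rw [dif_neg hi]
            simp only [Fin.val_mk]
            by_cases hil : (i : ℕ) = l
            · rw [if_pos (by omega), if_pos hil]
            · rw [if_neg (by omega), if_neg hil]
        rw [hent, hidx0]
        exact one_ne_zero
      omega
    · -- all three active variables on the left of the cut
      have hrank1 : (unfold 4 d k θ).rank ≤ 1 := by
        apply aux_rank_le_one _ (fun a => unfold 4 d k θ a 0)
          (fun b => if b = 0 then 1 else 0)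
        intro a b
        by_cases hb : b = 0
        · rw [hb, if_pos rfl, mul_one]
        · rw [if_neg hb, mul_zero]
          obtain ⟨j, hbj⟩ := Function.ne_iff.mp hb
          rw [hval]
          refine claimA _ ⟨k + (j : ℕ), by omega⟩ (Or.inr (by
            simp only [Fin.val_mk]; omega)) ?_
          simp only [Fin.val_mk]
          rw [dif_neg (by omega)]
          have hidx : (⟨k + (j : ℕ) - k, by omega⟩ : Fin (d - k)) = j := by
            apply Fin.ext
            simp only [Fin.val_mk]
            omega
          rw [hidx]
          exact hbj
      have hrank2 : 1 ≤ (unfold 4 d k θ).rank := by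
        refine aux_one_le_rank (unfold 4 d k θ)
          (fun j => if (j : ℕ) = l then 1 else 0) 0 ?_
        have hent : unfold 4 d k θ (fun j => if (j : ℕ) = l then 1 else 0) 0 =
            θ (fun j => if (j : ℕ) = l then 1 else 0) := by
          rw [hval]
          congr 1
          funext i
          by_cases hi : (i : ℕ) < k
          · rw [dif_pos hi]
          · rw [dif_neg hi]
            simp only [Pi.zero_apply]
            rw [if_neg (by omega)]
        rw [hent, hidx0]
        exact one_ne_zero
      omega
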